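/- Let α : ℝ → ℝ be continuous, β : ℝ → ℝ continuous, λ > 0 a constant, and set γ(t) = λ·α(t). Let k ∈ ℂ with Re(k) ≠ 0, η ∈ ℝ, let P be an antiderivative of α and Q an antiderivative of β. Define θ(x,t) = k·x + i·k²·P(t) + η and A(x,t) = e^{i·Q(t)} · e^{θ(x,t)} / (1 + (λ/(2·(k+k̄)²))·e^{θ(x,t)+θ̄(x,t)}). Then A satisfies the vcNLS equation i·A_t + α(t)·A_xx + β(t)·A + γ(t)·|A|²·A = 0 for all (x,t) ∈ ℝ². -/

import Mathlib

set_option maxHeartbeats 1000000 in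
/-- The general Hirota one-soliton solution of the vcNLS equation
`i·A_t + α(t)·A_xx + β(t)·A + γ(t)·|A|²·A = 0` with `γ = λ·α`, `λ > 0`. -/
theorem vcNLS_one_soliton
    (α β : ℝ → ℝ) (hα : Continuous α) (hβ : Continuous β)
    (lam : ℝ) (hlam : 0 < lam)
    (γ : ℝ → ℝ) (hγ : ∀ t, γ t = lam * α t)
    (k : ℂ) (hk : k.re ≠ 0) (η : ℝ)
    (P Q : ℝ → ℝ)
    (hP : ∀ t, HasDerivAt P (α t) t) (hQ : ∀ t, HasDerivAt Q (β t) t) :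
    let θ : ℝ → ℝ → ℂ := fun x t => k * (x : ℂ) + Complex.I * k ^ 2 * (P t : ℂ) + (η : ℂ)
    let θb : ℝ → ℝ → ℂ := fun x t =>
      (starRingEnd ℂ) k * (x : ℂ) - Complex.I * ((starRingEnd ℂ) k) ^ 2 * (P t : ℂ) + (η : ℂ)
    let A : ℝ → ℝ → ℂ := fun x t =>
      Complex.exp (Complex.I * (Q t : ℂ)) * Complex.exp (θ x t) /
        (1 + ((lam : ℂ) / (2 * (k + (starRingEnd ℂ) k) ^ 2)) * Complex.exp (θ x t + θb x t))
    ∀ x t : ℝ,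
      Complex.I * deriv (fun τ => A x τ) t
        + (α t : ℂ) * deriv (deriv (fun y => A y t)) x
        + (β t : ℂ) * A x t
        + (γ t : ℂ) * (‖A x t‖ : ℂ) ^ 2 * A x t = 0 := by
  intro θ θb A x t
  have hKre : k + (starRingEnd ℂ) k = ((2 * k.re : ℝ) : ℂ) := by
    rw [Complex.add_conj]
  have hs0 : k + (starRingEnd ℂ) k ≠ 0 := by
    rw [hKre]
    exact_mod_cast mul_ne_zero two_ne_zero hk
  set K : ℂ := (starRingEnd ℂ) k with hKdef
  set c : ℂ := (lam : ℂ) / (2 * (k + K) ^ 2) with hc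
  -- the real form of c
  have hsq : (0:ℝ) < (2 * k.re) ^ 2 := by positivity
  have hcre : c = ((lam / (2 * (2 * k.re) ^ 2) : ℝ) : ℂ) := by
    rw [hc, hKre]; push_cast; ring
  have hcpos : (0:ℝ) < lam / (2 * (2 * k.re) ^ 2) := div_pos hlam (by positivity)
  -- θ + θb is real
  have hθsum : ∀ y τ : ℝ, θ y τ + θb y τ
      = ((2 * k.re * y - 2 * (k ^ 2).im * P τ + 2 * η : ℝ) : ℂ) := by
    intro y τ
    show k * (y:ℂ) + Complex.I * k ^ 2 * (P τ : ℂ) + (η:ℂ)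
        + (K * (y:ℂ) - Complex.I * K ^ 2 * (P τ : ℂ) + (η:ℂ)) = _
    rw [hKdef]
    apply Complex.ext <;>
      simp [Complex.add_re, Complex.add_im, Complex.mul_re, Complex.mul_im, pow_two,
        Complex.sub_re, Complex.sub_im] <;> ring
  -- denominator never vanishes
  have hDne : ∀ y τ : ℝ, (1 + c * Complex.exp (θ y τ + θb y τ)) ≠ 0 := by
    intro y τ
    rw [hθsum, hcre, ← Complex.ofReal_exp, ← Complex.ofReal_mul, ← Complex.ofReal_one,
      ← Complex.ofReal_add]
    exact_mod_cast ne_of_gt (by positivity)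
  -- x–derivatives at fixed t
  have hRe : ∀ y : ℝ, HasDerivAt (fun y : ℝ => ((y : ℝ) : ℂ)) 1 y := fun y =>
    (hasDerivAt_id y).ofReal_comp
  have hθx : ∀ y : ℝ, HasDerivAt (fun y : ℝ => θ y t) k y := by
    intro y
    have h := (((hRe y).const_mul k).add_const (Complex.I * k ^ 2 * (P t : ℂ))).add_const (η : ℂ)
    rw [mul_one] at h; exact h
  have hθbx : ∀ y : ℝ, HasDerivAt (fun y : ℝ => θb y t) K y := by
    intro y
    have h := (((hRe y).const_mul K).sub_const (Complex.I * K ^ 2 * (P t : ℂ))).add_const (η : ℂ)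
    rw [mul_one] at h; exact h
  have hu : ∀ y : ℝ, HasDerivAt (fun y : ℝ => Complex.exp (θ y t))
      (Complex.exp (θ y t) * k) y := fun y => (hθx y).cexp
  have hv : ∀ y : ℝ, HasDerivAt (fun y : ℝ => Complex.exp (θ y t + θb y t))
      (Complex.exp (θ y t + θb y t) * (k + K)) y := fun y => ((hθx y).add (hθbx y)).cexp
  have hDx : ∀ y : ℝ, HasDerivAt (fun y : ℝ => 1 + c * Complex.exp (θ y t + θb y t))
      (c * (Complex.exp (θ y t + θb y t) * (k + K))) y := fun y =>
    ((hv y).const_mul c).const_add 1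
  set E : ℂ := Complex.exp (Complex.I * (Q t : ℂ)) with hE
  have hderiv1 : deriv (fun y : ℝ => A y t) = fun y =>
      (E * (Complex.exp (θ y t) * k) * (1 + c * Complex.exp (θ y t + θb y t))
        - E * Complex.exp (θ y t) * (c * (Complex.exp (θ y t + θb y t) * (k + K))))
        / (1 + c * Complex.exp (θ y t + θb y t)) ^ 2 :=
    funext fun y => (((hu y).const_mul E).div (hDx y) (hDne y t)).deriv
  -- second x–derivative
  have hN : ∀ y : ℝ, HasDerivAt (fun y : ℝ =>
      E * (Complex.exp (θ y t) * k) * (1 + c * Complex.exp (θ y t + θb y t))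
        - E * Complex.exp (θ y t) * (c * (Complex.exp (θ y t + θb y t) * (k + K))))
      (E * (Complex.exp (θ y t) * k * k) * (1 + c * Complex.exp (θ y t + θb y t))
        + E * (Complex.exp (θ y t) * k) * (c * (Complex.exp (θ y t + θb y t) * (k + K)))
        - (E * (Complex.exp (θ y t) * k) * (c * (Complex.exp (θ y t + θb y t) * (k + K)))
          + E * Complex.exp (θ y t) * (c * (Complex.exp (θ y t + θb y t) * (k + K) * (k + K))))) y := by
    intro y
    have ha := (((hu y).mul_const k).const_mul E).mul (hDx y)
    have hb := ((hu y).const_mul E).mul (((hv y).mul_const (k + K)).const_mul c)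
    have h := ha.sub hb
    convert h using 1
    · rfl
    · rfl
  have hD2 : ∀ y : ℝ, HasDerivAt (fun y : ℝ => (1 + c * Complex.exp (θ y t + θb y t)) ^ 2)
      (c * (Complex.exp (θ y t + θb y t) * (k + K)) * (1 + c * Complex.exp (θ y t + θb y t))
        + (1 + c * Complex.exp (θ y t + θb y t)) * (c * (Complex.exp (θ y t + θb y t) * (k + K)))) y := by
    intro y
    have h := (hDx y).mul (hDx y)
    simp only [pow_two]; exact h
  have h2 := (hN x).div (hD2 x) (pow_ne_zero 2 (hDne x t))
  -- t–derivative at fixed x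
  have hPt : HasDerivAt (fun τ : ℝ => ((P τ : ℝ) : ℂ)) ((α t : ℝ) : ℂ) t := (hP t).ofReal_comp
  have hQt : HasDerivAt (fun τ : ℝ => ((Q τ : ℝ) : ℂ)) ((β t : ℝ) : ℂ) t := (hQ t).ofReal_comp
  have hθt : HasDerivAt (fun τ : ℝ => θ x τ) (Complex.I * k ^ 2 * (α t : ℂ)) t :=
    ((hPt.const_mul (Complex.I * k ^ 2)).const_add (k * (x:ℂ))).add_const (η : ℂ)
  have hθbt : HasDerivAt (fun τ : ℝ => θb x τ) (-(Complex.I * K ^ 2 * (α t : ℂ))) t := by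
    have h := ((hPt.const_mul (Complex.I * K ^ 2)).const_sub (K * (x:ℂ))).add_const (η : ℂ)
    exact h
  have hnum_t := ((hQt.const_mul Complex.I).cexp.mul hθt.cexp)
  have hden_t := (((hθt.add hθbt).cexp).const_mul c).const_add 1
  have ht := hnum_t.div hden_t (hDne x t)
  simp only [Pi.div_def, Pi.mul_def, Pi.add_def] at h2 ht
  rw [hderiv1, h2.deriv, ht.deriv]
  have hAval : A x t = E * Complex.exp (θ x t) / (1 + c * Complex.exp (θ x t + θb x t)) := rfl
  have hconjθ : (starRingEnd ℂ) (θ x t) = θb x t := by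
    show (starRingEnd ℂ) (k * (x:ℂ) + Complex.I * k ^ 2 * (P t:ℂ) + (η:ℂ))
        = K * (x:ℂ) - Complex.I * K ^ 2 * (P t:ℂ) + (η:ℂ)
    simp [map_add, map_mul, map_pow, Complex.conj_I, Complex.conj_ofReal, hKdef]
    try ring
  have hconjθb : (starRingEnd ℂ) (θb x t) = θ x t := by
    show (starRingEnd ℂ) (K * (x:ℂ) - Complex.I * K ^ 2 * (P t:ℂ) + (η:ℂ))
        = k * (x:ℂ) + Complex.I * k ^ 2 * (P t:ℂ) + (η:ℂ)
    simp [map_add, map_sub, map_mul, map_pow, Complex.conj_I, Complex.conj_ofReal, hKdef]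
    try ring
  have hconjc : (starRingEnd ℂ) c = c := by rw [hcre, Complex.conj_ofReal]
  have h1c : (starRingEnd ℂ) (Complex.I * (Q t : ℂ)) = -(Complex.I * (Q t : ℂ)) := by
    simp [Complex.conj_I, Complex.conj_ofReal]
  have hconjsum : (starRingEnd ℂ) (θ x t + θb x t) = θ x t + θb x t := by
    rw [map_add, hconjθ, hconjθb, add_comm]
  have hconjA : (starRingEnd ℂ) (A x t)
      = Complex.exp (-(Complex.I * (Q t : ℂ))) * Complex.exp (θb x t)
        / (1 + c * Complex.exp (θ x t + θb x t)) := by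
    rw [hAval, hE, map_div₀, map_mul, ← Complex.exp_conj, ← Complex.exp_conj, h1c, hconjθ,
      map_add, map_one, map_mul, hconjc, ← Complex.exp_conj, hconjsum]
  have hnorm : ((‖A x t‖ : ℝ) : ℂ) ^ 2 = A x t * (starRingEnd ℂ) (A x t) := by
    rw [Complex.mul_conj]
    norm_cast
    rw [← Complex.sq_norm]
  have hlam2 : (lam : ℂ) = 2 * c * (k + K) ^ 2 := by
    rw [hc]
    field_simp
    try ring
  have hD' : 1 + c * (Complex.exp (θ x t) * Complex.exp (θb x t)) ≠ 0 := by
    rw [← Complex.exp_add]; exact hDne x t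
  have hE0 : E ≠ 0 := Complex.exp_ne_zero _
  rw [hnorm, hconjA, hAval, hγ t, Complex.exp_neg, ← hE, Complex.ofReal_mul, hlam2,
    show Complex.exp (θ x t + θb x t) = Complex.exp (θ x t) * Complex.exp (θb x t) from
      Complex.exp_add _ _]
  set u := Complex.exp (θ x t) with hudef
  set w := Complex.exp (θb x t) with hwdef
  have hu0 : u ≠ 0 := Complex.exp_ne_zero _
  have hw0 : w ≠ 0 := Complex.exp_ne_zero _
  have hD'' : 1 + c * (u * w) ≠ 0 := hD'
  clear_value K c E u w
  field_simp [hu0, hw0, hE0, hD'']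
  ring_nf
  simp only [Complex.I_sq]
  ring
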